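/- arXiv:1701.04246 — 4 statements merged into one kernel-verified Lean document; each statement's English description precedes it below -/
import Mathlib

section
/- Let A and B be Hermitian complex q×q matrices and let D := B - A. Then the matricial interval [A,B] := {X Hermitian : A ≤ X ≤ B} (with respect to the Loewner order) is nonempty if and only if D is positive semidefinite. In this case, [A,B] = {A + √D · K · √D : K Hermitian with 0 ≤ K ≤ I}. -/
open Matrix ComplexOrder

/-- The positive semidefinite square root of a positive semidefinite matrix
(removed from Mathlib; restored with its former definition). -/
noncomputable def Matrix.PosSemidef.sqrt {n : Type*} [Fintype n] [DecidableEq n] {𝕜 : Type*}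
    [RCLike 𝕜] {A : Matrix n n 𝕜} (hA : A.PosSemidef) : Matrix n n 𝕜 :=
  (hA.1.eigenvectorUnitary : Matrix n n 𝕜) *
    diagonal (fun i => ((√(hA.1.eigenvalues i) : ℝ) : 𝕜)) *
    (star hA.1.eigenvectorUnitary : Matrix n n 𝕜)

section Aux

variable {n : Type*} [Fintype n] [DecidableEq n]

private lemma conj_mul_conj (U : Matrix n n ℂ) (hU : star U * U = 1) (f g : n → ℂ) :
    (U * diagonal f * star U) * (U * diagonal g * star U)
      = U * diagonal (fun i => f i * g i) * star U := by
  have : diagonal f * diagonal g = diagonal (fun i => f i * g i) := by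
    rw [diagonal_mul_diagonal]
  calc (U * diagonal f * star U) * (U * diagonal g * star U)
      = U * (diagonal f * ((star U * U) * (diagonal g * star U))) := by
        simp only [Matrix.mul_assoc]
    _ = U * diagonal (fun i => f i * g i) * star U := by
        rw [hU, Matrix.one_mul, ← Matrix.mul_assoc (diagonal f), this, Matrix.mul_assoc]

private lemma conj_isHermitian (U : Matrix n n ℂ) (f : n → ℂ) (hf : ∀ i, star (f i) = f i) :
    (U * diagonal f * star U).IsHermitian := by
  have : star f = f := funext hf
  unfold Matrix.IsHermitian
  rw [star_eq_conjTranspose, conjTranspose_mul, conjTranspose_mul, diagonal_conjTranspose,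
    this, conjTranspose_conjTranspose, ← star_eq_conjTranspose, Matrix.mul_assoc]

private lemma conj_posSemidef (U : Matrix n n ℂ) (f : n → ℂ) (hf : ∀ i, 0 ≤ f i) :
    (U * diagonal f * star U).PosSemidef := by
  rw [star_eq_conjTranspose]
  exact (posSemidef_diagonal_iff.mpr hf).mul_mul_conjTranspose_same U

private lemma quad_conj (M N : Matrix n n ℂ) (hN : N.IsHermitian) (x : n → ℂ) :
    star x ⬝ᵥ (N * M * N) *ᵥ x = star (N *ᵥ x) ⬝ᵥ M *ᵥ (N *ᵥ x) := by
  rw [star_mulVec, hN.eq, ← mulVec_mulVec, ← mulVec_mulVec, dotProduct_mulVec]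

private lemma eq_zero_of_mulVec_zero (M : Matrix n n ℂ) (h : ∀ x, M *ᵥ x = 0) : M = 0 := by
  ext i j
  simpa [mulVec_single] using congrFun (h (Pi.single j 1)) i

end Aux

/-- The matricial interval `[A,B]` (Loewner order) is nonempty iff `D = B - A`
is positive semidefinite, in which case `[A,B] = {A + √D K √D : 0 ≤ K ≤ I}`. -/
theorem stmt_0 (q : ℕ) (A B : Matrix (Fin q) (Fin q) ℂ)
    (hA : A.IsHermitian) (hB : B.IsHermitian) :
    ((∃ X : Matrix (Fin q) (Fin q) ℂ, X.IsHermitian ∧ (X - A).PosSemidef ∧ (B - X).PosSemidef)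
      ↔ (B - A).PosSemidef) ∧
    ∀ hD : (B - A).PosSemidef,
      {X : Matrix (Fin q) (Fin q) ℂ | X.IsHermitian ∧ (X - A).PosSemidef ∧ (B - X).PosSemidef} =
        {Y : Matrix (Fin q) (Fin q) ℂ | ∃ K : Matrix (Fin q) (Fin q) ℂ,
          K.IsHermitian ∧ K.PosSemidef ∧ (1 - K).PosSemidef ∧
          Y = A + hD.sqrt * K * hD.sqrt} := by
  constructor
  · constructor
    · rintro ⟨X, _, hXA, hBX⟩
      have : (B - X) + (X - A) = B - A := by abel
      simpa [this] using hBX.add hXA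
    · intro hD
      exact ⟨A, hA, by simpa using Matrix.PosSemidef.zero, hD⟩
  · intro hD
    set U : Matrix (Fin q) (Fin q) ℂ := (hD.1.eigenvectorUnitary : Matrix (Fin q) (Fin q) ℂ)
      with hUdef
    set lam := hD.1.eigenvalues with hlam
    have hUU : star U * U = 1 := by
      simpa [hUdef] using (Matrix.mem_unitaryGroup_iff').mp hD.1.eigenvectorUnitary.2
    have hUU' : U * star U = 1 := by
      simpa [hUdef] using (Matrix.mem_unitaryGroup_iff).mp hD.1.eigenvectorUnitary.2
    -- functions of the eigenvalues
    set fs : Fin q → ℂ := fun i => (Real.sqrt (lam i) : ℂ) with hfs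
    set ft : Fin q → ℂ := fun i => if lam i = 0 then 0 else ((Real.sqrt (lam i))⁻¹ : ℂ) with hft
    set fp : Fin q → ℂ := fun i => if lam i = 0 then 0 else 1 with hfp
    set fn : Fin q → ℂ := fun i => if lam i = 0 then 1 else 0 with hfn
    obtain ⟨S, hS⟩ : ∃ S, S = hD.sqrt := ⟨_, rfl⟩
    obtain ⟨T, hT⟩ : ∃ T, T = U * diagonal ft * star U := ⟨_, rfl⟩
    obtain ⟨P, hP⟩ : ∃ P, P = U * diagonal fp * star U := ⟨_, rfl⟩
    obtain ⟨N, hN⟩ : ∃ N', N' = U * diagonal fn * star U := ⟨_, rfl⟩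
    have hSdef : S = U * diagonal fs * star U := by
      rw [hS, Matrix.PosSemidef.sqrt]
      rfl
    have hsne : ∀ i, lam i ≠ 0 → (Real.sqrt (lam i) : ℂ) ≠ 0 := by
      intro i h
      simp only [ne_eq, Complex.ofReal_eq_zero]
      exact Real.sqrt_ne_zero'.mpr (lt_of_le_of_ne (hD.eigenvalues_nonneg i) (Ne.symm h))
    have hTS : T * S = P := by
      have hfun : (fun i => ft i * fs i) = fp := by
        funext i
        by_cases h : lam i = 0
        · simp [hft, hfp, hfs, h]
        · simp [hft, hfp, hfs, h, inv_mul_cancel₀ (hsne i h)]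
      rw [hSdef, hT, hP, conj_mul_conj U hUU, hfun]
    have hST : S * T = P := by
      have hfun : (fun i => fs i * ft i) = fp := by
        funext i
        by_cases h : lam i = 0
        · simp [hft, hfp, hfs, h]
        · simp [hft, hfp, hfs, h, mul_inv_cancel₀ (hsne i h)]
      rw [hSdef, hT, hP, conj_mul_conj U hUU, hfun]
    have hPP : P * P = P := by
      have hfun : (fun i => fp i * fp i) = fp := by
        funext i
        by_cases h : lam i = 0 <;> simp [hfp, h]
      rw [hP, conj_mul_conj U hUU, hfun]
    have hPN : P + N = 1 := by
      have hfun : (fun i => fp i + fn i) = fun _ => (1 : ℂ) := by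
        funext i
        by_cases h : lam i = 0 <;> simp [hfp, hfn, h]
      rw [hP, hN, ← Matrix.add_mul, ← Matrix.mul_add, diagonal_add, hfun, diagonal_one,
        Matrix.mul_one, hUU']
    have hTherm : T.IsHermitian := by
      rw [hT]
      refine conj_isHermitian U ft fun i => ?_
      by_cases h : lam i = 0 <;> simp [hft, h, ← Complex.ofReal_inv]
    have hNherm : N.IsHermitian := by
      rw [hN]
      refine conj_isHermitian U fn fun i => ?_
      by_cases h : lam i = 0 <;> simp [hfn, h]
    have hNpsd : N.PosSemidef := by
      rw [hN]
      refine conj_posSemidef U fn fun i => ?_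
      by_cases h : lam i = 0 <;> simp [hfn, h]
    have hSherm : S.IsHermitian := by
      rw [hSdef]
      exact conj_isHermitian U fs fun i => by simp [hfs]
    have hSSq : S * S = B - A := by
      have hfun : (fun i => fs i * fs i) = fun i => (lam i : ℂ) := by
        funext i
        simp only [hfs]
        rw [← Complex.ofReal_mul, Real.mul_self_sqrt (x := lam i) (hD.eigenvalues_nonneg i)]
      rw [hSdef, conj_mul_conj U hUU, hfun]
      conv_rhs => rw [hD.1.spectral_theorem]
      rfl
    have hDN : (B - A) * N = 0 := by
      have hDdef : B - A = U * diagonal (fun i => (lam i : ℂ)) * star U := by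
        have := hD.1.spectral_theorem
        rw [this]
        rfl
      have hfun : (fun i => (lam i : ℂ) * fn i) = fun _ => (0 : ℂ) := by
        funext i
        by_cases h : lam i = 0 <;> simp [hfn, h]
      rw [hDdef, hN, conj_mul_conj U hUU, hfun]
      simp
    have hTDT : T * (B - A) * T = P := by
      have hSS : S * S = B - A := hSSq
      rw [← hSS, ← Matrix.mul_assoc, Matrix.mul_assoc (T * S), hTS, hST, hPP]
    -- key: if 0 ≤ M ≤ D then M * N = 0
    have key : ∀ M : Matrix (Fin q) (Fin q) ℂ, M.PosSemidef → ((B - A) - M).PosSemidef →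
        M * N = 0 := by
      intro M hM hDM
      have hNDN : N * (B - A) * N = 0 := by
        have : N * (B - A) * N = N * ((B - A) * N) := by rw [Matrix.mul_assoc]
        rw [this, hDN, Matrix.mul_zero]
      have hquad : ∀ x, star (N *ᵥ x) ⬝ᵥ M *ᵥ (N *ᵥ x) = 0 := by
        intro x
        have h1 : (0 : ℂ) ≤ star (N *ᵥ x) ⬝ᵥ M *ᵥ (N *ᵥ x) := hM.dotProduct_mulVec_nonneg _
        have h2 : (0 : ℂ) ≤ star (N *ᵥ x) ⬝ᵥ ((B - A) - M) *ᵥ (N *ᵥ x) := hDM.dotProduct_mulVec_nonneg _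
        have h3 : star (N *ᵥ x) ⬝ᵥ (B - A) *ᵥ (N *ᵥ x) = 0 := by
          rw [← quad_conj (B - A) N hNherm x, hNDN]
          simp
        rw [sub_mulVec, dotProduct_sub, h3, zero_sub, le_neg] at h2
        exact le_antisymm (by simpa using h2) h1
      have hMN : ∀ x, M *ᵥ (N *ᵥ x) = 0 := fun x =>
        (hM.dotProduct_mulVec_zero_iff (N *ᵥ x)).mp (hquad x)
      refine eq_zero_of_mulVec_zero _ fun x => ?_
      rw [← mulVec_mulVec]
      exact hMN x
    -- the set equality
    ext Y
    simp only [Set.mem_setOf_eq, ← hS]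
    constructor
    · rintro ⟨hY, hYA, hBY⟩
      obtain ⟨M, hM⟩ : ∃ M, M = Y - A := ⟨_, rfl⟩
      have hMpsd : M.PosSemidef := by rw [hM]; exact hYA
      have hDMpsd : ((B - A) - M).PosSemidef := by
        have : (B - A) - M = B - Y := by rw [hM]; abel
        rw [this]; exact hBY
      have hMN : M * N = 0 := key M hMpsd hDMpsd
      have hMP : M * P = M := by
        have : M * (P + N) = M * 1 := by rw [hPN]
        rw [Matrix.mul_add, hMN, add_zero, Matrix.mul_one] at this
        exact this
      have hPM : P * M = M := by
        have hPherm : P.IsHermitian := by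
          rw [hP]
          refine conj_isHermitian U fp fun i => ?_
          by_cases h : lam i = 0 <;> simp [hfp, h]
        have := congrArg Matrix.conjTranspose hMP
        rwa [conjTranspose_mul, hPherm.eq, hMpsd.1.eq] at this
      refine ⟨T * M * T, ?_, ?_, ?_, ?_⟩
      · unfold Matrix.IsHermitian
        rw [conjTranspose_mul, conjTranspose_mul, hTherm.eq, hMpsd.1.eq, Matrix.mul_assoc]
      · have := hMpsd.mul_mul_conjTranspose_same T
        rwa [hTherm.eq] at this
      · have heq : (1 : Matrix (Fin q) (Fin q) ℂ) - T * M * T = N + T * ((B - A) - M) * T := by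
          have h1 : T * ((B - A) - M) * T = P - T * M * T := by
            rw [Matrix.mul_sub, Matrix.sub_mul, hTDT]
          rw [h1, ← hPN]
          abel
        rw [heq]
        have h2 : (T * ((B - A) - M) * T).PosSemidef := by
          have := hDMpsd.mul_mul_conjTranspose_same T
          rwa [hTherm.eq] at this
        exact hNpsd.add h2
      · have hSKS : S * (T * M * T) * S = M := by
          have : S * (T * M * T) * S = (S * T) * M * (T * S) := by
            simp only [Matrix.mul_assoc]
          rw [this, hST, hTS, Matrix.mul_assoc, hMP, hPM]
        rw [hSKS, hM]
        abel
    · rintro ⟨K, hK, hKpsd, hK1psd, rfl⟩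
      have hSKS_herm : (S * K * S).IsHermitian := by
        unfold Matrix.IsHermitian
        rw [conjTranspose_mul, conjTranspose_mul, hSherm.eq, hK.eq, Matrix.mul_assoc]
      refine ⟨hA.add hSKS_herm, ?_, ?_⟩
      · rw [add_sub_cancel_left]
        have := hKpsd.mul_mul_conjTranspose_same S
        rwa [hSherm.eq] at this
      · have : B - (A + S * K * S) = S * (1 - K) * S := by
          rw [Matrix.mul_sub, Matrix.sub_mul, Matrix.mul_one, hSSq]
          abel
        rw [this]
        have := hK1psd.mul_mul_conjTranspose_same S
        rwa [hSherm.eq] at this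
end

section
/- Let M be a complex (p+q)×(p+q) matrix with block representation M = [[A, B], [C, D]] where A is p×p. Then M is positive semidefinite if and only if: A and D - C A^† B are both positive semidefinite, the column space of B is contained in the column space of A, and C = B*. -/
open Matrix ComplexOrder
open scoped Classical

/-- Moore-Penrose inverse of a complex matrix. -/
noncomputable def mp {m n : Type*} [Fintype m] [Fintype n] (A : Matrix m n ℂ) : Matrix n m ℂ :=
  if h : ∃ X : Matrix n m ℂ,
      A * X * A = A ∧ X * A * X = X ∧ (A * X)ᴴ = A * X ∧ (X * A)ᴴ = X * A
  then h.choose else 0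

section Aux

variable {m n k : Type*} [Fintype m] [Fintype n] [Fintype k] [DecidableEq n] [DecidableEq k]

lemma penrose_unique (A : Matrix m n ℂ) (X Y : Matrix n m ℂ)
    (hX1 : A * X * A = A) (hX2 : X * A * X = X) (hX3 : (A * X)ᴴ = A * X) (hX4 : (X * A)ᴴ = X * A)
    (hY1 : A * Y * A = A) (hY2 : Y * A * Y = Y) (hY3 : (A * Y)ᴴ = A * Y) (hY4 : (Y * A)ᴴ = Y * A) :
    X = Y := by
  have hAX : A * X = A * Y := by
    calc A * X = (A * Y * A) * X := by rw [hY1]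
    _ = (A * Y) * (A * X) := by rw [Matrix.mul_assoc]
    _ = (A * Y)ᴴ * (A * X)ᴴ := by rw [hY3, hX3]
    _ = ((A * X) * (A * Y))ᴴ := (conjTranspose_mul _ _).symm
    _ = ((A * X * A) * Y)ᴴ := by simp only [Matrix.mul_assoc]
    _ = (A * Y)ᴴ := by rw [hX1]
    _ = A * Y := hY3
  have hXA : X * A = Y * A := by
    calc X * A = X * (A * Y * A) := by rw [hY1]
    _ = (X * A) * (Y * A) := by simp only [Matrix.mul_assoc]
    _ = (X * A)ᴴ * (Y * A)ᴴ := by rw [hX4, hY4]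
    _ = ((Y * A) * (X * A))ᴴ := (conjTranspose_mul _ _).symm
    _ = (Y * (A * X * A))ᴴ := by simp only [Matrix.mul_assoc]
    _ = (Y * A)ᴴ := by rw [hX1]
    _ = Y * A := hY4
  calc X = X * A * X := hX2.symm
  _ = X * (A * Y) := by rw [← hAX, Matrix.mul_assoc]
  _ = (X * A) * Y := by rw [Matrix.mul_assoc]
  _ = (Y * A) * Y := by rw [hXA]
  _ = Y := by rw [hY2]

lemma exists_penrose {A : Matrix n n ℂ} (hA : A.IsHermitian) :
    ∃ X : Matrix n n ℂ,
      A * X * A = A ∧ X * A * X = X ∧ (A * X)ᴴ = A * X ∧ (X * A)ᴴ = X * A := by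
  set U : Matrix n n ℂ := (hA.eigenvectorUnitary : Matrix n n ℂ) with hU
  have hUU : (star U) * U = 1 := Matrix.mem_unitaryGroup_iff'.mp hA.eigenvectorUnitary.2
  set d : n → ℂ := RCLike.ofReal ∘ hA.eigenvalues with hd
  have hspec : A = U * diagonal d * star U := hA.spectral_theorem
  have key : ∀ e f : n → ℂ, (U * diagonal e * star U) * (U * diagonal f * star U)
      = U * diagonal (fun i => e i * f i) * star U := by
    intro e f
    calc (U * diagonal e * star U) * (U * diagonal f * star U)
        = U * diagonal e * ((star U * U) * (diagonal f * star U)) := by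
          simp only [Matrix.mul_assoc]
      _ = U * diagonal (fun i => e i * f i) * star U := by
          rw [hUU, Matrix.one_mul, ← Matrix.mul_assoc, Matrix.mul_assoc U,
            diagonal_mul_diagonal]
  have herm : ∀ e : n → ℂ, (∀ i, star (e i) = e i) →
      (U * diagonal e * star U)ᴴ = U * diagonal e * star U := by
    intro e he
    have : star e = e := funext fun i => he i
    simp [conjTranspose_mul, Matrix.star_eq_conjTranspose, diagonal_conjTranspose, this,
      Matrix.mul_assoc]
  have hdstar : ∀ i, star ((d i)⁻¹) = (d i)⁻¹ := by
    intro i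
    rw [star_inv₀]
    simp [hd, RCLike.star_def, RCLike.conj_ofReal]
  have hmid : (fun i => d i * (d i)⁻¹ * d i) = d := by
    funext i
    rcases eq_or_ne (d i) 0 with h | h
    · simp [h]
    · field_simp
  have hmid2 : (fun i => (d i)⁻¹ * d i * (d i)⁻¹) = fun i => (d i)⁻¹ := by
    funext i
    rcases eq_or_ne (d i) 0 with h | h
    · simp [h]
    · field_simp
  refine ⟨U * diagonal (fun i => (d i)⁻¹) * star U, ?_, ?_, ?_, ?_⟩
  · rw [hspec, key, key, hmid]
  · rw [hspec, key, key, hmid2]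
  · rw [hspec, key]
    refine herm _ fun i => ?_
    rcases eq_or_ne (d i) 0 with h | h
    · simp [h]
    · rw [star_mul', hdstar i]
      simp [hd, RCLike.star_def, RCLike.conj_ofReal, mul_comm]
  · rw [hspec, key]
    refine herm _ fun i => ?_
    rcases eq_or_ne (d i) 0 with h | h
    · simp [h]
    · rw [star_mul', hdstar i]
      simp [hd, RCLike.star_def, RCLike.conj_ofReal, mul_comm]

lemma mp_spec {A : Matrix n n ℂ} (hA : A.IsHermitian) :
    A * mp A * A = A ∧ mp A * A * mp A = mp A ∧ (A * mp A)ᴴ = A * mp A ∧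
      (mp A * A)ᴴ = mp A * A := by
  have h := exists_penrose hA
  rw [mp, dif_pos h]
  exact h.choose_spec

lemma mp_isHermitian {A : Matrix n n ℂ} (hA : A.IsHermitian) : (mp A).IsHermitian := by
  obtain ⟨h1, h2, h3, h4⟩ := mp_spec hA
  have c1 : A * (mp A)ᴴ * A = A := by
    have h := congrArg conjTranspose h1
    simp only [conjTranspose_mul, hA.eq, ← Matrix.mul_assoc] at h
    exact h
  have c2 : (mp A)ᴴ * A * (mp A)ᴴ = (mp A)ᴴ := by
    have h := congrArg conjTranspose h2
    simp only [conjTranspose_mul, hA.eq, ← Matrix.mul_assoc] at h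
    exact h
  have e : A * (mp A)ᴴ = mp A * A := by rw [← h4, conjTranspose_mul, hA.eq]
  have e' : (mp A)ᴴ * A = A * mp A := by rw [← h3, conjTranspose_mul, hA.eq]
  have c3 : (A * (mp A)ᴴ)ᴴ = A * (mp A)ᴴ := by rw [e, h4]
  have c4 : ((mp A)ᴴ * A)ᴴ = (mp A)ᴴ * A := by rw [e', h3]
  exact penrose_unique A _ _ c1 c2 c3 c4 h1 h2 h3 h4

lemma cancel_left {m n k : Type*} [Fintype m] [Fintype n] [Fintype k] [DecidableEq k]
    (L : Matrix m n ℂ) (M : Matrix n k ℂ) (h : Lᴴ * L * M = 0) : L * M = 0 := by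
  ext i j
  have hc : (Lᴴ * L) *ᵥ (M *ᵥ Pi.single j 1) = 0 := by
    rw [Matrix.mulVec_mulVec, h, Matrix.zero_mulVec]
  have := (Matrix.conjTranspose_mul_self_mulVec_eq_zero L _).mp hc
  have h2 : (L * M) *ᵥ Pi.single j 1 = 0 := by
    rw [← Matrix.mulVec_mulVec, this]
  have := congrFun h2 i
  simpa [Matrix.mulVec_single_one] using this

end Aux

/-- the block matrix `[[A, B], [C, D]]` is positive semidefinite iff `A` and the
Schur complement `D - C A† B` are positive semidefinite, `ran B ⊆ ran A`, and `C = B*`. -/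
theorem stmt_8 (p q : ℕ) (A : Matrix (Fin p) (Fin p) ℂ) (B : Matrix (Fin p) (Fin q) ℂ)
    (C : Matrix (Fin q) (Fin p) ℂ) (D : Matrix (Fin q) (Fin q) ℂ) :
    (Matrix.fromBlocks A B C D).PosSemidef ↔
      A.PosSemidef ∧ (D - C * mp A * B).PosSemidef ∧
        LinearMap.range B.mulVecLin ≤ LinearMap.range A.mulVecLin ∧ C = Bᴴ := by
  constructor
  · intro hM
    obtain ⟨L, hL⟩ : ∃ L : Matrix (Fin p ⊕ Fin q) (Fin p ⊕ Fin q) ℂ, fromBlocks A B C D = Lᴴ * L := by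
      open scoped MatrixOrder Matrix.Norms.L2Operator in
      exact CStarAlgebra.nonneg_iff_eq_star_mul_self.mp hM.nonneg
    set L1 : Matrix (Fin p ⊕ Fin q) (Fin p) ℂ := L.submatrix id Sum.inl with hL1
    set L2 : Matrix (Fin p ⊕ Fin q) (Fin q) ℂ := L.submatrix id Sum.inr with hL2
    have hA : A = L1ᴴ * L1 := by
      ext i j
      have := Matrix.ext_iff.mpr hL (Sum.inl i) (Sum.inl j)
      simpa [Matrix.mul_apply, Matrix.conjTranspose_apply, hL1] using this
    have hB : B = L1ᴴ * L2 := by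
      ext i j
      have := Matrix.ext_iff.mpr hL (Sum.inl i) (Sum.inr j)
      simpa [Matrix.mul_apply, Matrix.conjTranspose_apply, hL1, hL2] using this
    have hC : C = L2ᴴ * L1 := by
      ext i j
      have := Matrix.ext_iff.mpr hL (Sum.inr i) (Sum.inl j)
      simpa [Matrix.mul_apply, Matrix.conjTranspose_apply, hL1, hL2] using this
    have hD : D = L2ᴴ * L2 := by
      ext i j
      have := Matrix.ext_iff.mpr hL (Sum.inr i) (Sum.inr j)
      simpa [Matrix.mul_apply, Matrix.conjTranspose_apply, hL2] using this
    have hApsd : A.PosSemidef := hA ▸ posSemidef_conjTranspose_mul_self L1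
    have hAH : A.IsHermitian := hApsd.1
    obtain ⟨m1, m2, m3, m4⟩ := mp_spec hAH
    have hX : (mp A)ᴴ = mp A := mp_isHermitian hAH
    -- L1 * (mp A * A) = L1
    have hz : L1ᴴ * L1 * (mp A * A - 1) = 0 := by
      rw [Matrix.mul_sub, Matrix.mul_one, ← hA, ← Matrix.mul_assoc, m1, sub_self]
    have hL1X : L1 * (mp A * A) = L1 := by
      have := cancel_left L1 _ hz
      rw [Matrix.mul_sub, Matrix.mul_one, sub_eq_zero] at this
      exact this
    -- A * mp A * L1ᴴ = L1ᴴ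
    have hP1 : A * mp A * L1ᴴ = L1ᴴ := by
      have h := congrArg conjTranspose hL1X
      simp only [conjTranspose_mul, hX, hAH.eq, ← Matrix.mul_assoc] at h ⊢
      exact h
    refine ⟨hApsd, ?_, ?_, ?_⟩
    · -- Schur complement
      set P : Matrix (Fin p ⊕ Fin q) (Fin p ⊕ Fin q) ℂ := L1 * mp A * L1ᴴ with hPdef
      have hPH : Pᴴ = P := by
        simp only [hPdef, conjTranspose_mul, hX, conjTranspose_conjTranspose, Matrix.mul_assoc]
      have hPP : P * P = P := by
        calc P * P = L1 * (mp A * (L1ᴴ * L1) * mp A) * L1ᴴ := by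
              simp only [hPdef, Matrix.mul_assoc]
        _ = L1 * (mp A * A * mp A) * L1ᴴ := by rw [← hA]
        _ = P := by rw [m2]
      have hQ : (1 - P) * (1 - P) = 1 - P := by
        simp only [Matrix.mul_sub, Matrix.sub_mul, Matrix.one_mul, Matrix.mul_one, hPP]
        abel
      have hCPB : C * mp A * B = L2ᴴ * P * L2 := by
        simp only [hC, hB, hPdef, Matrix.mul_assoc]
      have key : D - C * mp A * B = ((1 - P) * L2)ᴴ * ((1 - P) * L2) := by
        calc D - C * mp A * B = L2ᴴ * L2 - L2ᴴ * P * L2 := by rw [← hD, hCPB]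
        _ = L2ᴴ * ((1 - P) * L2) := by
            rw [Matrix.sub_mul, Matrix.one_mul, Matrix.mul_sub]
            simp only [Matrix.mul_assoc]
        _ = L2ᴴ * (((1 - P) * (1 - P)) * L2) := by rw [hQ]
        _ = (L2ᴴ * (1 - P)ᴴ) * ((1 - P) * L2) := by
            rw [conjTranspose_sub, conjTranspose_one, hPH]
            simp only [Matrix.mul_assoc]
        _ = ((1 - P) * L2)ᴴ * ((1 - P) * L2) := by rw [conjTranspose_mul]
      rw [key]
      exact posSemidef_conjTranspose_mul_self _
    · -- range
      have hABB : A * (mp A * B) = B := by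
        calc A * (mp A * B) = (A * mp A * L1ᴴ) * L2 := by
              rw [hB]; simp only [Matrix.mul_assoc]
        _ = B := by rw [hP1, hB]
      conv_lhs => rw [← hABB]
      rw [Matrix.mulVecLin_mul]
      exact LinearMap.range_comp_le_range _ _
    · rw [hB, hC, conjTranspose_mul, conjTranspose_conjTranspose]
  · rintro ⟨hApsd, hS, hR, rfl⟩
    have hAH : A.IsHermitian := hApsd.1
    obtain ⟨m1, m2, m3, m4⟩ := mp_spec hAH
    have hX : (mp A)ᴴ = mp A := mp_isHermitian hAH
    have hAXB : A * mp A * B = B := by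
      have hcol : ∀ k : Fin q, (A * mp A * B) *ᵥ Pi.single k 1 = B *ᵥ Pi.single k 1 := by
        intro k
        obtain ⟨w, hw⟩ := hR (LinearMap.mem_range_self B.mulVecLin (Pi.single k 1))
        have hw' : A *ᵥ w = B *ᵥ Pi.single k 1 := hw
        calc (A * mp A * B) *ᵥ Pi.single k 1 = (A * mp A) *ᵥ (B *ᵥ Pi.single k 1) := by
              rw [← Matrix.mulVec_mulVec]
        _ = (A * mp A) *ᵥ (A *ᵥ w) := by rw [hw']
        _ = (A * mp A * A) *ᵥ w := by rw [Matrix.mulVec_mulVec]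
        _ = B *ᵥ Pi.single k 1 := by rw [m1, hw']
      ext i j
      have := congrFun (hcol j) i
      simpa [Matrix.mulVec_single_one] using this
    have hBXA : Bᴴ * mp A * A = Bᴴ := by
      have h := congrArg conjTranspose hAXB
      simp only [conjTranspose_mul, hX, hAH.eq, ← Matrix.mul_assoc] at h
      exact h
    set S : Matrix (Fin q) (Fin q) ℂ := D - Bᴴ * mp A * B with hSdef
    set N : Matrix (Fin p ⊕ Fin q) (Fin p ⊕ Fin q) ℂ := fromBlocks 1 (mp A * B) 0 1 with hNdef
    set K : Matrix (Fin p ⊕ Fin q) (Fin p ⊕ Fin q) ℂ := fromBlocks A 0 0 S with hKdef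
    have hb : A * (mp A * B) = B := by rw [← Matrix.mul_assoc, hAXB]
    have hd2 : Bᴴ * (mp A * B) + S = D := by
      rw [← Matrix.mul_assoc, hSdef]
      abel
    have hdecomp : fromBlocks A B Bᴴ D = Nᴴ * K * N := by
      rw [hNdef, hKdef, fromBlocks_conjTranspose, fromBlocks_multiply, fromBlocks_multiply]
      simp only [conjTranspose_one, conjTranspose_zero, conjTranspose_mul, hX,
        Matrix.one_mul, Matrix.mul_one, Matrix.zero_mul, Matrix.mul_zero,
        add_zero, zero_add]
      rw [hb, hBXA, hd2]
    have hK : K.PosSemidef := by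
      obtain ⟨A1, hA1⟩ : ∃ A1 : Matrix (Fin p) (Fin p) ℂ, A = A1ᴴ * A1 := by
        open scoped MatrixOrder Matrix.Norms.L2Operator in
        exact CStarAlgebra.nonneg_iff_eq_star_mul_self.mp hApsd.nonneg
      obtain ⟨S1, hS1⟩ : ∃ S1 : Matrix (Fin q) (Fin q) ℂ, S = S1ᴴ * S1 := by
        open scoped MatrixOrder Matrix.Norms.L2Operator in
        exact CStarAlgebra.nonneg_iff_eq_star_mul_self.mp hS.nonneg
      have : K = (fromBlocks A1 0 0 S1)ᴴ * (fromBlocks A1 0 0 S1) := by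
        rw [hKdef, fromBlocks_conjTranspose, fromBlocks_multiply]
        simp [← hA1, ← hS1]
      rw [this]
      exact posSemidef_conjTranspose_mul_self _
    rw [hdecomp]
    exact hK.conjTranspose_mul_mul_same N
end

section
/- Let n ≥ 0, let s_0, ..., s_{2n+2} be complex p×q matrices, and let α, β ∈ ℂ. Let H_m := (s_{j+k})_{j,k=0}^m denote block Hankel matrices, and define the transformed Hankel matrices H^{(a)}_n := (-α s_{j+k} + s_{j+k+1})_{j,k=0}^n, H^{(b)}_n := (β s_{j+k} - s_{j+k+1})_{j,k=0}^n, H^{(c)}_n := (-αβ s_{j+k} + (α+β) s_{j+k+1} - s_{j+k+2})_{j,k=0}^n. Let Δ := [I_{(n+1)q}; 0] and ∇ := [0; I_{(n+1)q}] be the (n+2)q × (n+1)q block injection matrices. Then (β-α) H^{(a)}_n = (∇ - ᾱΔ)* H_{n+1} (∇ - αΔ) + H^{(c)}_n and (β-α) H^{(b)}_n = (β̄Δ - ∇)* H_{n+1} (βΔ - ∇) + H^{(c)}_n. -/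
open Matrix

/-- Block Hankel matrix `(t_{j+k})_{j,k=0}^{m-1}` built from a sequence of `p×q` matrices,
with `m` block rows and columns. -/
def hankelBlk (p q m : ℕ) (t : ℕ → Matrix (Fin p) (Fin q) ℂ) :
    Matrix (Fin m × Fin p) (Fin m × Fin q) ℂ :=
  Matrix.of fun ja kb => t ((ja.1 : ℕ) + (kb.1 : ℕ)) ja.2 kb.2

/-- The block injection `Δ_{p,m} = [I_{mp}; 0_{p×mp}]`, of size `(m+1)p × mp`. -/
def deltaBlk (p m : ℕ) : Matrix (Fin (m + 1) × Fin p) (Fin m × Fin p) ℂ :=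
  Matrix.of fun ja kb => if (ja.1 : ℕ) = (kb.1 : ℕ) ∧ ja.2 = kb.2 then 1 else 0

/-- The block injection `∇_{p,m} = [0_{p×mp}; I_{mp}]`, of size `(m+1)p × mp`. -/
def nablaBlk (p m : ℕ) : Matrix (Fin (m + 1) × Fin p) (Fin m × Fin p) ℂ :=
  Matrix.of fun ja kb => if (ja.1 : ℕ) = (kb.1 : ℕ) + 1 ∧ ja.2 = kb.2 then 1 else 0

lemma cond_succ {n : ℕ} (j' : Fin (n+2)) (j : Fin (n+1)) :
    ((j' : ℕ) = (j : ℕ) + 1) ↔ j' = j.succ := by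
  rw [Fin.ext_iff]; simp

lemma cond_cast {n : ℕ} (j' : Fin (n+2)) (j : Fin (n+1)) :
    ((j' : ℕ) = (j : ℕ)) ↔ j' = j.castSucc := by
  rw [Fin.ext_iff]; simp

lemma key (p q n : ℕ) (c d : ℂ) (s : ℕ → Matrix (Fin p) (Fin q) ℂ) :
    (nablaBlk p (n + 1) - (starRingEnd ℂ c) • deltaBlk p (n + 1))ᴴ *
        hankelBlk p q (n + 2) s * (nablaBlk q (n + 1) - d • deltaBlk q (n + 1)) =
    hankelBlk p q (n + 1)
      (fun j => (c * d) • s j - c • s (j + 1) - d • s (j + 1) + s (j + 2)) := by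
  ext ⟨j, a⟩ ⟨k, b⟩
  simp only [mul_apply, conjTranspose_apply, Matrix.sub_apply, Matrix.smul_apply, nablaBlk, deltaBlk,
    hankelBlk, of_apply, Fintype.sum_prod_type, cond_succ, cond_cast, smul_eq_mul,
    map_sub, RingHomCompTriple.comp_apply, ite_and]
  simp [sub_mul, mul_sub, Finset.sum_sub_distrib, ite_mul, mul_ite, mul_zero, zero_mul,
    one_mul, apply_ite (starRingEnd ℂ), Complex.conj_conj,
    Finset.sum_ite_eq', Fin.val_succ, Fin.coe_castSucc]
  ring_nf

lemma key2 (p q n : ℕ) (c d : ℂ) (s : ℕ → Matrix (Fin p) (Fin q) ℂ) :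
    ((starRingEnd ℂ c) • deltaBlk p (n + 1) - nablaBlk p (n + 1))ᴴ *
        hankelBlk p q (n + 2) s * (d • deltaBlk q (n + 1) - nablaBlk q (n + 1)) =
    hankelBlk p q (n + 1)
      (fun j => (c * d) • s j - c • s (j + 1) - d • s (j + 1) + s (j + 2)) := by
  have h : ((starRingEnd ℂ c) • deltaBlk p (n + 1) - nablaBlk p (n + 1))ᴴ *
        hankelBlk p q (n + 2) s * (d • deltaBlk q (n + 1) - nablaBlk q (n + 1)) =
      (nablaBlk p (n + 1) - (starRingEnd ℂ c) • deltaBlk p (n + 1))ᴴ *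
        hankelBlk p q (n + 2) s * (nablaBlk q (n + 1) - d • deltaBlk q (n + 1)) := by
    rw [← neg_sub (nablaBlk p (n + 1)) ((starRingEnd ℂ c) • deltaBlk p (n + 1)),
      ← neg_sub (nablaBlk q (n + 1)) (d • deltaBlk q (n + 1))]
    rw [conjTranspose_neg, Matrix.neg_mul, Matrix.neg_mul, Matrix.mul_neg, neg_neg]
  rw [h, key]

/-- `(β-α) H^{(a)}_n = (∇ - ᾱΔ)* H_{n+1} (∇ - αΔ) + H^{(c)}_n` and
`(β-α) H^{(b)}_n = (β̄Δ - ∇)* H_{n+1} (βΔ - ∇) + H^{(c)}_n`. -/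
theorem stmt_11 (p q n : ℕ) (α β : ℂ) (s : ℕ → Matrix (Fin p) (Fin q) ℂ) :
    (β - α) • hankelBlk p q (n + 1) (fun j => -α • s j + s (j + 1)) =
        (nablaBlk p (n + 1) - (starRingEnd ℂ α) • deltaBlk p (n + 1))ᴴ *
            hankelBlk p q (n + 2) s *
            (nablaBlk q (n + 1) - α • deltaBlk q (n + 1)) +
          hankelBlk p q (n + 1) (fun j => -(α * β) • s j + (α + β) • s (j + 1) - s (j + 2)) ∧
      (β - α) • hankelBlk p q (n + 1) (fun j => β • s j - s (j + 1)) =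
        ((starRingEnd ℂ β) • deltaBlk p (n + 1) - nablaBlk p (n + 1))ᴴ *
            hankelBlk p q (n + 2) s *
            (β • deltaBlk q (n + 1) - nablaBlk q (n + 1)) +
          hankelBlk p q (n + 1) (fun j => -(α * β) • s j + (α + β) • s (j + 1) - s (j + 2)) := by
  constructor
  · rw [key p q n α α s]
    ext ⟨j, a⟩ ⟨k, b⟩
    simp [hankelBlk]
    ring
  · rw [key2 p q n β β s]
    ext ⟨j, a⟩ ⟨k, b⟩
    simp [hankelBlk]
    ring
end

section
/- Let (A,B) be a pair of complex q×q matrices with the column space of A contained in that of A+B and the null space of A+B contained in that of A (and similarly by symmetry for B). Then the Moore-Penrose inverse of the parallel sum satisfies (A : B)^† = P (A^† + B^†) Q, where P is the orthogonal projection onto ran(A*) ∩ ran(B*) and Q is the orthogonal projection onto ran(A) ∩ ran(B). -/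
open Matrix
open scoped Classical

namespace MPAux

variable {n : Type*} [Fintype n] [DecidableEq n]

lemma ext_mulVec {M N : Matrix n n ℂ} (h : ∀ v, M *ᵥ v = N *ᵥ v) : M = N := by
  ext i j
  have := congrFun (h (Pi.single j 1)) i
  simpa using this

def PenroseEq (A X : Matrix n n ℂ) : Prop :=
  A * X * A = A ∧ X * A * X = X ∧ (A * X)ᴴ = A * X ∧ (X * A)ᴴ = X * A

lemma herm_exists (H : Matrix n n ℂ) (hH : H.IsHermitian) :
    ∃ G : Matrix n n ℂ, H * G * H = H ∧ G * H * G = G ∧ Gᴴ = G ∧ G * H = H * G := by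
  classical
  set V : Matrix n n ℂ := (hH.eigenvectorUnitary : Matrix n n ℂ) with hV
  have hV1 : star V * V = 1 := Matrix.mem_unitaryGroup_iff'.mp (hH.eigenvectorUnitary).2
  have hV2 : V * star V = 1 := Matrix.mem_unitaryGroup_iff.mp (hH.eigenvectorUnitary).2
  set d : n → ℂ := fun i => ((hH.eigenvalues i : ℝ) : ℂ) with hd
  have hHspec : H = V * diagonal d * star V := hH.spectral_theorem
  refine ⟨V * diagonal (fun i => (d i)⁻¹) * star V, ?_, ?_, ?_, ?_⟩
  · rw [hHspec]
    calc (V * diagonal d * star V) * (V * diagonal (fun i => (d i)⁻¹) * star V) *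
        (V * diagonal d * star V)
        = V * (diagonal d * (star V * V) * diagonal (fun i => (d i)⁻¹) * (star V * V) *
            diagonal d) * star V := by
          simp only [Matrix.mul_assoc]
      _ = V * (diagonal d * diagonal (fun i => (d i)⁻¹) * diagonal d) * star V := by
          rw [hV1]; simp only [Matrix.mul_one, Matrix.one_mul]
      _ = V * diagonal d * star V := by
          rw [diagonal_mul_diagonal, diagonal_mul_diagonal]
          have hfun : (fun i => d i * (d i)⁻¹ * d i) = d := by
            funext i
            rcases eq_or_ne (d i) 0 with h | h
            · simp [h]
            · field_simp
          rw [hfun]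
  · rw [hHspec]
    calc (V * diagonal (fun i => (d i)⁻¹) * star V) * (V * diagonal d * star V) *
        (V * diagonal (fun i => (d i)⁻¹) * star V)
        = V * (diagonal (fun i => (d i)⁻¹) * (star V * V) * diagonal d * (star V * V) *
            diagonal (fun i => (d i)⁻¹)) * star V := by
          simp only [Matrix.mul_assoc]
      _ = V * (diagonal (fun i => (d i)⁻¹) * diagonal d * diagonal (fun i => (d i)⁻¹)) *
            star V := by
          rw [hV1]; simp only [Matrix.mul_one, Matrix.one_mul]
      _ = V * diagonal (fun i => (d i)⁻¹) * star V := by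
          rw [diagonal_mul_diagonal, diagonal_mul_diagonal]
          have hfun : (fun i => (d i)⁻¹ * d i * (d i)⁻¹) = fun i => (d i)⁻¹ := by
            funext i
            rcases eq_or_ne (d i) 0 with h | h
            · simp [h]
            · field_simp
          rw [hfun]
  · have : (fun i => (d i)⁻¹) = star fun i => (d i)⁻¹ := by
      funext i
      simp [hd, ← Complex.ofReal_inv]
    calc (V * diagonal (fun i => (d i)⁻¹) * star V)ᴴ
        = V * (diagonal (fun i => (d i)⁻¹))ᴴ * star V := by
          simp only [conjTranspose_mul, star_eq_conjTranspose, conjTranspose_conjTranspose,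
            Matrix.mul_assoc]
      _ = V * diagonal (fun i => (d i)⁻¹) * star V := by
          rw [diagonal_conjTranspose, ← this]
  · rw [hHspec]
    calc (V * diagonal (fun i => (d i)⁻¹) * star V) * (V * diagonal d * star V)
        = V * (diagonal (fun i => (d i)⁻¹) * (star V * V) * diagonal d) * star V := by
          simp only [Matrix.mul_assoc]
      _ = V * (diagonal (fun i => (d i)⁻¹) * diagonal d) * star V := by
          rw [hV1]; simp only [Matrix.mul_one, Matrix.one_mul]
      _ = V * (diagonal d * diagonal (fun i => (d i)⁻¹)) * star V := by
          rw [diagonal_mul_diagonal, diagonal_mul_diagonal]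
          have hfun : (fun i => (d i)⁻¹ * d i) = fun i => d i * (d i)⁻¹ := by
            funext i
            exact mul_comm _ _
          rw [hfun]
      _ = (V * diagonal d * star V) * (V * diagonal (fun i => (d i)⁻¹) * star V) := by
          simp only [Matrix.mul_assoc]
          rw [← Matrix.mul_assoc (star V) V, hV1, Matrix.one_mul]


open scoped ComplexOrder in
lemma exists_penrose (A : Matrix n n ℂ) : ∃ X, PenroseEq A X := by
  obtain ⟨G, hG1, hG2, hG3, hG4⟩ := herm_exists (Aᴴ * A) (isHermitian_conjTranspose_mul_self A)
  have h0 : (Aᴴ * A) * (G * (Aᴴ * A)) = Aᴴ * A := by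
    rw [← Matrix.mul_assoc]; exact hG1
  have key : A * (G * (Aᴴ * A)) = A := by
    apply ext_mulVec
    intro v
    have h1 : (Aᴴ * A) *ᵥ ((G * (Aᴴ * A)) *ᵥ v - v) = 0 := by
      rw [mulVec_sub, mulVec_mulVec, h0, sub_self]
    have h2 : A *ᵥ ((G * (Aᴴ * A)) *ᵥ v - v) = 0 := by
      rwa [conjTranspose_mul_self_mulVec_eq_zero] at h1
    rw [mulVec_sub, sub_eq_zero] at h2
    rw [mulVec_mulVec] at h2
    exact h2
  refine ⟨G * Aᴴ, ?_, ?_, ?_, ?_⟩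
  · calc A * (G * Aᴴ) * A = A * (G * (Aᴴ * A)) := by noncomm_ring
      _ = A := key
  · calc G * Aᴴ * A * (G * Aᴴ) = G * (Aᴴ * A) * G * Aᴴ := by noncomm_ring
      _ = G * Aᴴ := by rw [hG2]
  · rw [conjTranspose_mul, conjTranspose_mul, conjTranspose_conjTranspose, hG3,
      Matrix.mul_assoc]
  · rw [Matrix.mul_assoc, conjTranspose_mul, (isHermitian_conjTranspose_mul_self A).eq, hG3,
      ← hG4]

lemma penrose_unique {A X Y : Matrix n n ℂ} (hX : PenroseEq A X) (hY : PenroseEq A Y) :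
    X = Y := by
  obtain ⟨hX1, hX2, hX3, hX4⟩ := hX
  obtain ⟨hY1, hY2, hY3, hY4⟩ := hY
  have f1 : Xᴴ * Aᴴ = A * X := by rw [← conjTranspose_mul]; exact hX3
  have f2 : Aᴴ * Yᴴ = Y * A := by rw [← conjTranspose_mul]; exact hY4
  have e1 : Aᴴ = Aᴴ * (A * Y)ᴴ := by
    conv_lhs => rw [← hY1]
    rw [conjTranspose_mul]
  have e2 : Aᴴ = X * A * Aᴴ := by
    conv_lhs => rw [← hX1]
    rw [Matrix.mul_assoc, conjTranspose_mul, hX4]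
  have hX2' : X * (A * X) = X := by rw [← Matrix.mul_assoc]; exact hX2
  have h1 : X = X * A * Y := by
    calc X = X * A * X := hX2.symm
      _ = X * (Xᴴ * Aᴴ) := by rw [f1]; noncomm_ring
      _ = X * (Xᴴ * (Aᴴ * (A * Y)ᴴ)) := by rw [← e1]
      _ = X * (Xᴴ * Aᴴ) * (A * Y)ᴴ := by noncomm_ring
      _ = X * (A * X) * (A * Y)ᴴ := by rw [f1]
      _ = X * (A * Y)ᴴ := by rw [hX2']
      _ = X * (A * Y) := by rw [hY3]
      _ = X * A * Y := by rw [Matrix.mul_assoc]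
  have h2 : Y = X * A * Y := by
    calc Y = Y * A * Y := hY2.symm
      _ = Aᴴ * Yᴴ * Y := by rw [f2]
      _ = X * A * Aᴴ * Yᴴ * Y := by rw [← e2]
      _ = X * A * (Aᴴ * Yᴴ) * Y := by noncomm_ring
      _ = X * A * (Y * A) * Y := by rw [f2]
      _ = X * A * (Y * A * Y) := by noncomm_ring
      _ = X * A * Y := by rw [hY2]
  rw [h1, ← h2]

lemma mp_spec (A : Matrix n n ℂ) : PenroseEq A (mp A) := by
  have h : ∃ X : Matrix n n ℂ,
      A * X * A = A ∧ X * A * X = X ∧ (A * X)ᴴ = A * X ∧ (X * A)ᴴ = X * A :=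
    exists_penrose A
  rw [mp, dif_pos h]
  exact h.choose_spec

lemma mp_eq {A X : Matrix n n ℂ} (h : PenroseEq A X) : mp A = X :=
  penrose_unique (mp_spec A) h

lemma exists_eq_mul_of_range_le {M N : Matrix n n ℂ}
    (h : LinearMap.range M.mulVecLin ≤ LinearMap.range N.mulVecLin) :
    ∃ C : Matrix n n ℂ, M = N * C := by
  choose c hc using fun j : n => h (LinearMap.mem_range_self M.mulVecLin (Pi.single j 1))
  refine ⟨Matrix.of (fun i j => c j i), ?_⟩
  ext i j
  have h2 := congrFun (hc j) i
  simp only [mulVecLin_apply, mulVec_single_one] at h2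
  calc M i j = (Mᵀ j) i := rfl
    _ = (N *ᵥ c j) i := h2.symm
    _ = (N * Matrix.of (fun i j => c j i)) i j := by
        simp [Matrix.mul_apply, mulVec, dotProduct]

lemma range_mul_le (M N : Matrix n n ℂ) :
    LinearMap.range (M * N).mulVecLin ≤ LinearMap.range M.mulVecLin := by
  rw [mulVecLin_mul]
  exact LinearMap.range_comp_le_range _ _

lemma mp_mul_self_conjTranspose (A : Matrix n n ℂ) : mp A * A * Aᴴ = Aᴴ := by
  have h := mp_spec A
  calc mp A * A * Aᴴ = (mp A * A)ᴴ * Aᴴ := by rw [h.2.2.2]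
    _ = (A * (mp A * A))ᴴ := by rw [← conjTranspose_mul]
    _ = (A * mp A * A)ᴴ := by rw [Matrix.mul_assoc]
    _ = Aᴴ := by rw [h.1]

lemma ker_le_imp {S A : Matrix n n ℂ}
    (h : LinearMap.ker S.mulVecLin ≤ LinearMap.ker A.mulVecLin) :
    A * (mp S * S) = A := by
  apply ext_mulVec
  intro v
  have h0 : S * (mp S * S) = S := by rw [← Matrix.mul_assoc]; exact (mp_spec S).1
  have h1 : S *ᵥ ((mp S * S) *ᵥ v - v) = 0 := by
    rw [mulVec_sub, mulVec_mulVec, h0, sub_self]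
  have h2 : A *ᵥ ((mp S * S) *ᵥ v - v) = 0 := by
    have := h (LinearMap.mem_ker.mpr (by simpa [mulVecLin_apply] using h1))
    simpa [mulVecLin_apply] using this
  rw [mulVec_sub, sub_eq_zero] at h2
  rw [mulVec_mulVec] at h2
  exact h2

lemma range_le_imp {B S : Matrix n n ℂ}
    (h : LinearMap.range B.mulVecLin ≤ LinearMap.range S.mulVecLin) :
    S * mp S * B = B := by
  obtain ⟨C, hC⟩ := exists_eq_mul_of_range_le h
  rw [hC, ← Matrix.mul_assoc, (mp_spec S).1]

lemma proj_absorb {T P : Matrix n n ℂ} (hPh : Pᴴ = P)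
    (h : LinearMap.range P.mulVecLin ≤ LinearMap.range Tᴴ.mulVecLin) :
    P * (mp T * T) = P := by
  obtain ⟨C, hC⟩ := exists_eq_mul_of_range_le h
  have h1 : mp T * T * P = P := by
    rw [hC, ← Matrix.mul_assoc, mp_mul_self_conjTranspose]
  calc P * (mp T * T) = Pᴴ * (mp T * T)ᴴ := by rw [hPh, (mp_spec T).2.2.2]
    _ = (mp T * T * P)ᴴ := by rw [← conjTranspose_mul]
    _ = P := by rw [h1, hPh]

lemma proj_absorb' {T Q : Matrix n n ℂ}
    (h : LinearMap.range Q.mulVecLin ≤ LinearMap.range T.mulVecLin) :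
    T * mp T * Q = Q := by
  obtain ⟨C, hC⟩ := exists_eq_mul_of_range_le h
  rw [hC, ← Matrix.mul_assoc, (mp_spec T).1]

end MPAux

/-- `P` is the matrix of the orthogonal projection of `ℂ^q` onto the subspace `U`:
it is Hermitian, idempotent, and has column space `U`. -/
def IsOrthProj {q : ℕ} (P : Matrix (Fin q) (Fin q) ℂ) (U : Submodule ℂ (Fin q → ℂ)) : Prop :=
  P.IsHermitian ∧ P * P = P ∧ LinearMap.range P.mulVecLin = U

open MPAux in
/-- under the parallel-summability conditions on `(A,B)` (and symmetrically on
`(B,A)`), `(A : B)† = P (A† + B†) Q` where `P` is the orthogonal projection onto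
`ran(A*) ∩ ran(B*)` and `Q` the one onto `ran(A) ∩ ran(B)`. -/
theorem stmt_15 (q : ℕ) (A B : Matrix (Fin q) (Fin q) ℂ)
    (hA1 : LinearMap.range A.mulVecLin ≤ LinearMap.range (A + B).mulVecLin)
    (hA2 : LinearMap.ker (A + B).mulVecLin ≤ LinearMap.ker A.mulVecLin)
    (hB1 : LinearMap.range B.mulVecLin ≤ LinearMap.range (A + B).mulVecLin)
    (hB2 : LinearMap.ker (A + B).mulVecLin ≤ LinearMap.ker B.mulVecLin)
    (P Q : Matrix (Fin q) (Fin q) ℂ)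
    (hP : IsOrthProj P (LinearMap.range Aᴴ.mulVecLin ⊓ LinearMap.range Bᴴ.mulVecLin))
    (hQ : IsOrthProj Q (LinearMap.range A.mulVecLin ⊓ LinearMap.range B.mulVecLin)) :
    mp (A * mp (A + B) * B) = P * (mp A + mp B) * Q := by
  obtain ⟨hPh, hPP, hPr⟩ := hP
  obtain ⟨hQh, hQP, hQr⟩ := hQ
  have hPh' : Pᴴ = P := hPh
  have hQh' : Qᴴ = Q := hQh
  -- basic consequences of the hypotheses
  have hASpS : A * (mp (A + B) * (A + B)) = A := ker_le_imp hA2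
  have hASpS' : A * mp (A + B) * (A + B) = A := by rw [Matrix.mul_assoc]; exact hASpS
  have hSSpA : (A + B) * mp (A + B) * A = A := range_le_imp hA1
  -- the two forms of the parallel sum
  have M2 : B * mp (A + B) * A = A * mp (A + B) * B := by
    have e1 : A * mp (A + B) * B = A * mp (A + B) * (A + B) - A * mp (A + B) * A := by
      noncomm_ring
    have e2 : B * mp (A + B) * A = (A + B) * mp (A + B) * A - A * mp (A + B) * A := by
      noncomm_ring
    rw [e1, e2, hASpS', hSSpA]
  -- range inclusions
  have hranAH : LinearMap.range Aᴴ.mulVecLin ≤ LinearMap.range (A + B)ᴴ.mulVecLin := by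
    have e : Aᴴ = (A + B)ᴴ * ((mp (A + B))ᴴ * Aᴴ) := by
      conv_lhs => rw [← hASpS']
      rw [conjTranspose_mul, conjTranspose_mul]
    rw [e]
    exact range_mul_le _ _
  -- absorption identities
  have hPA : P * (mp A * A) = P := proj_absorb hPh' (hPr.le.trans inf_le_left)
  have hPB : P * (mp B * B) = P := proj_absorb hPh' (hPr.le.trans inf_le_right)
  have hPS : P * (mp (A + B) * (A + B)) = P :=
    proj_absorb hPh' ((hPr.le.trans inf_le_left).trans hranAH)
  have hQA : A * mp A * Q = Q := proj_absorb' (hQr.le.trans inf_le_left)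
  have hQB : B * mp B * Q = Q := proj_absorb' (hQr.le.trans inf_le_right)
  have hQS : (A + B) * mp (A + B) * Q = Q :=
    proj_absorb' ((hQr.le.trans inf_le_left).trans hA1)
  -- Q * M = M  and  M * P = M
  have hMA : LinearMap.range (A * mp (A + B) * B).mulVecLin ≤ LinearMap.range A.mulVecLin := by
    rw [Matrix.mul_assoc]
    exact range_mul_le _ _
  have hMB : LinearMap.range (A * mp (A + B) * B).mulVecLin ≤ LinearMap.range B.mulVecLin := by
    rw [← M2, Matrix.mul_assoc]
    exact range_mul_le _ _
  have hQM : Q * (A * mp (A + B) * B) = A * mp (A + B) * B := by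
    obtain ⟨C, hC⟩ := exists_eq_mul_of_range_le
      (show LinearMap.range (A * mp (A + B) * B).mulVecLin ≤ LinearMap.range Q.mulVecLin by
        rw [hQr]; exact le_inf hMA hMB)
    rw [hC, ← Matrix.mul_assoc, hQP]
  have hMP : (A * mp (A + B) * B) * P = A * mp (A + B) * B := by
    have h1 : LinearMap.range (A * mp (A + B) * B)ᴴ.mulVecLin ≤
        LinearMap.range Aᴴ.mulVecLin := by
      have e : (A * mp (A + B) * B)ᴴ = Aᴴ * (B * mp (A + B))ᴴ := by
        rw [← M2, conjTranspose_mul]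
      rw [e]
      exact range_mul_le _ _
    have h2 : LinearMap.range (A * mp (A + B) * B)ᴴ.mulVecLin ≤
        LinearMap.range Bᴴ.mulVecLin := by
      have e : (A * mp (A + B) * B)ᴴ = Bᴴ * (A * mp (A + B))ᴴ := by
        rw [conjTranspose_mul]
      rw [e]
      exact range_mul_le _ _
    obtain ⟨C, hC⟩ := exists_eq_mul_of_range_le
      (show LinearMap.range (A * mp (A + B) * B)ᴴ.mulVecLin ≤ LinearMap.range P.mulVecLin by
        rw [hPr]; exact le_inf h1 h2)
    have h3 : P * (A * mp (A + B) * B)ᴴ = (A * mp (A + B) * B)ᴴ := by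
      rw [hC, ← Matrix.mul_assoc, hPP]
    calc (A * mp (A + B) * B) * P = (Pᴴ * (A * mp (A + B) * B)ᴴ)ᴴ := by
          simp only [conjTranspose_mul, conjTranspose_conjTranspose]
      _ = (A * mp (A + B) * B)ᴴᴴ := by rw [hPh', h3]
      _ = A * mp (A + B) * B := conjTranspose_conjTranspose _
  -- M * X = Q
  have hMX : (A * mp (A + B) * B) * (P * (mp A + mp B) * Q) = Q := by
    have t1 : (A * mp (A + B) * B) * (mp A * Q) = B * mp (A + B) * Q := by
      rw [← M2]
      calc B * mp (A + B) * A * (mp A * Q) = B * mp (A + B) * (A * mp A * Q) := by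
            noncomm_ring
        _ = B * mp (A + B) * Q := by rw [hQA]
    have t2 : (A * mp (A + B) * B) * (mp B * Q) = A * mp (A + B) * Q := by
      calc A * mp (A + B) * B * (mp B * Q) = A * mp (A + B) * (B * mp B * Q) := by
            noncomm_ring
        _ = A * mp (A + B) * Q := by rw [hQB]
    calc (A * mp (A + B) * B) * (P * (mp A + mp B) * Q)
        = ((A * mp (A + B) * B) * P) * ((mp A + mp B) * Q) := by noncomm_ring
      _ = (A * mp (A + B) * B) * ((mp A + mp B) * Q) := by rw [hMP]
      _ = (A * mp (A + B) * B) * (mp A * Q) + (A * mp (A + B) * B) * (mp B * Q) := by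
          noncomm_ring
      _ = B * mp (A + B) * Q + A * mp (A + B) * Q := by rw [t1, t2]
      _ = (A + B) * mp (A + B) * Q := by noncomm_ring
      _ = Q := hQS
  -- X * M = P
  have hXM : (P * (mp A + mp B) * Q) * (A * mp (A + B) * B) = P := by
    have t1 : P * mp A * (A * mp (A + B) * B) = P * (mp (A + B) * B) := by
      calc P * mp A * (A * mp (A + B) * B) = (P * (mp A * A)) * (mp (A + B) * B) := by
            noncomm_ring
        _ = P * (mp (A + B) * B) := by rw [hPA]
    have t2 : P * mp B * (A * mp (A + B) * B) = P * (mp (A + B) * A) := by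
      rw [← M2]
      calc P * mp B * (B * mp (A + B) * A) = (P * (mp B * B)) * (mp (A + B) * A) := by
            noncomm_ring
        _ = P * (mp (A + B) * A) := by rw [hPB]
    calc (P * (mp A + mp B) * Q) * (A * mp (A + B) * B)
        = (P * (mp A + mp B)) * (Q * (A * mp (A + B) * B)) := by noncomm_ring
      _ = (P * (mp A + mp B)) * (A * mp (A + B) * B) := by rw [hQM]
      _ = P * mp A * (A * mp (A + B) * B) + P * mp B * (A * mp (A + B) * B) := by
          noncomm_ring
      _ = P * (mp (A + B) * B) + P * (mp (A + B) * A) := by rw [t1, t2]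
      _ = P * (mp (A + B) * (A + B)) := by noncomm_ring
      _ = P := hPS
  -- assemble the four Penrose equations
  apply mp_eq
  refine ⟨?_, ?_, ?_, ?_⟩
  · rw [hMX]
    exact hQM
  · rw [hXM]
    calc P * (P * (mp A + mp B) * Q) = (P * P) * ((mp A + mp B) * Q) := by noncomm_ring
      _ = P * (mp A + mp B) * Q := by rw [hPP, Matrix.mul_assoc]
  · rw [hMX]
    exact hQh'
  · rw [hXM]
    exact hPh'
end
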